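/- If n = p₁^{a₁} · … · p_r^{a_r} > 1 is the prime factorization of n, then τ(n) ≥ τ^(e)(n) + (τ(n)/ω(n)) · (1/(a₁+1) + 1/(a₂+1) + … + 1/(a_r+1)). -/

import Mathlib

open Finset

/-- The number of exponential divisors of n. -/
def taue (n : ℕ) : ℕ := ∏ p ∈ n.primeFactors, (n.factorization p).divisors.card

lemma card_divisors_le_self' (m : ℕ) : m.divisors.card ≤ m := by
  rcases Nat.eq_zero_or_pos m with h | h
  · simp [h]
  · calc m.divisors.card ≤ (Finset.Icc 1 m).card :=
          Finset.card_le_card (fun d hd => Finset.mem_Icc.mpr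
            ⟨Nat.pos_of_mem_divisors hd, Nat.divisor_le hd⟩)
      _ = m := by rw [Nat.card_Icc]; omega

/-- For n > 1, τ(n) ≥ τ^(e)(n) + (τ(n)/ω(n)) · ∑ 1/(aᵢ+1). -/
theorem tau_ge_taue_add (n : ℕ) (hn : 1 < n) :
    (n.divisors.card : ℚ) ≥ (taue n : ℚ) +
      (n.divisors.card : ℚ) / (n.primeFactors.card : ℚ) *
        ∑ p ∈ n.primeFactors, (1 : ℚ) / ((n.factorization p : ℚ) + 1) := by
  classical
  have hn0 : n ≠ 0 := by omega
  set S := n.primeFactors with hSdef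
  have hSne : S.Nonempty := Nat.nonempty_primeFactors.mpr hn
  set a : ℕ → ℕ := fun p => n.factorization p with ha
  set x : ℕ → ℚ := fun p => 1 / ((a p : ℚ) + 1) with hx
  set P : ℚ := ∏ p ∈ S, ((a p : ℚ) + 1) with hPdef
  have htau : (n.divisors.card : ℚ) = P := by
    rw [hPdef, Nat.card_divisors hn0]
    push_cast
    rfl
  have hP : 0 < P := Finset.prod_pos (fun p hp => by positivity)
  have hr : (0:ℚ) < S.card := by exact_mod_cast hSne.card_pos
  have hx_pos : ∀ p ∈ S, 0 < x p := fun p hp => by positivity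
  have hx_le : ∀ p ∈ S, x p ≤ 1 := by
    intro p hp
    rw [hx]
    rw [div_le_one (by positivity)]
    simp
  obtain ⟨q, hq, hqmax⟩ := S.exists_max_image x hSne
  -- product bound
  have hprod : ∏ p ∈ S, (1 - x p) ≤ 1 - x q := by
    rw [← Finset.mul_prod_erase S _ hq]
    have h1 : ∏ p ∈ S.erase q, (1 - x p) ≤ 1 :=
      Finset.prod_le_one
        (fun p hp => by linarith [hx_le p (Finset.mem_of_mem_erase hp)])
        (fun p hp => by linarith [hx_pos p (Finset.mem_of_mem_erase hp)])
    have h0 : 0 ≤ 1 - x q := by linarith [hx_le q hq]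
    calc (1 - x q) * ∏ p ∈ S.erase q, (1 - x p) ≤ (1 - x q) * 1 :=
          mul_le_mul_of_nonneg_left h1 h0
      _ = 1 - x q := by ring
  have hsum : (∑ p ∈ S, x p) ≤ S.card * x q := by
    calc (∑ p ∈ S, x p) ≤ ∑ _p ∈ S, x q := Finset.sum_le_sum (fun p hp => hqmax p hp)
      _ = S.card * x q := by rw [Finset.sum_const, nsmul_eq_mul]
  -- taue bound
  have hfac : ∀ p ∈ S, (a p : ℚ) = ((a p : ℚ) + 1) * (1 - x p) := by
    intro p hp
    have h : ((a p : ℚ) + 1) ≠ 0 := by positivity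
    simp only [hx]
    rw [mul_sub, mul_one, mul_one_div_cancel h]
    ring
  have hprodA : ∏ p ∈ S, (a p : ℚ) = P * ∏ p ∈ S, (1 - x p) := by
    rw [hPdef, ← Finset.prod_mul_distrib]
    exact Finset.prod_congr rfl hfac
  have hte : (taue n : ℚ) ≤ ∏ p ∈ S, (a p : ℚ) := by
    have h : taue n ≤ ∏ p ∈ S, a p :=
      Finset.prod_le_prod' (fun p hp => card_divisors_le_self' (a p))
    exact_mod_cast h
  have hte2 : (taue n : ℚ) ≤ P * (1 - x q) := by
    calc (taue n : ℚ) ≤ ∏ p ∈ S, (a p : ℚ) := hte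
      _ = P * ∏ p ∈ S, (1 - x p) := hprodA
      _ ≤ P * (1 - x q) := mul_le_mul_of_nonneg_left hprod hP.le
  have key : P / S.card * (∑ p ∈ S, x p) ≤ P * x q := by
    rw [div_mul_eq_mul_div, div_le_iff₀ hr]
    calc P * ∑ p ∈ S, x p ≤ P * (S.card * x q) :=
          mul_le_mul_of_nonneg_left hsum hP.le
      _ = P * x q * S.card := by ring
  have hfin : P * (1 - x q) + P * x q = P := by ring
  rw [htau]
  have hgoal : (∑ p ∈ S, (1:ℚ) / ((n.factorization p : ℚ) + 1)) = ∑ p ∈ S, x p := rfl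
  rw [hgoal]
  linarith [hte2, key, hfin]
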